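/- For all x>0, (1/2) e^{−x} ln(1 + 2/x) < E_1(x) < e^{−x} ln(1 + 1/x), where E_1(x) = ∫_1^∞ e^{−xt}/t dt is the exponential integral. -/

import Mathlib

open Real Filter Topology MeasureTheory

noncomputable def Ff (x : ℝ) : ℝ := ∫ u in Set.Ioi x, Real.exp (-u) / u

lemma intF {x : ℝ} (hx : 0 < x) :
    IntegrableOn (fun u => Real.exp (-u) / u) (Set.Ioi x) := by
  have h1 : IntegrableOn (fun u : ℝ => x⁻¹ * Real.exp (-u)) (Set.Ioi x) := by
    have := exp_neg_integrableOn_Ioi x (one_pos)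
    have h := this.const_mul x⁻¹
    simp only [neg_one_mul] at h
    exact h
  refine Integrable.mono h1 ?_ ?_
  · exact ((Real.measurable_exp.comp measurable_neg).div measurable_id).aestronglyMeasurable
  · filter_upwards [ae_restrict_mem measurableSet_Ioi] with u hu
    have hux : x < u := hu
    have hu0 : 0 < u := hx.trans hux
    rw [Real.norm_eq_abs, Real.norm_eq_abs, abs_of_nonneg (by positivity),
      abs_of_nonneg (by positivity)]
    rw [div_le_iff₀ hu0]
    calc Real.exp (-u) = x⁻¹ * Real.exp (-u) * x := by field_simp
    _ ≤ x⁻¹ * Real.exp (-u) * u := by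
        apply mul_le_mul_of_nonneg_left hux.le (by positivity)

lemma subst {x : ℝ} (hx : 0 < x) :
    (∫ t in Set.Ioi (1 : ℝ), Real.exp (-(x * t)) / t) = Ff x := by
  have h := integral_comp_mul_left_Ioi (fun u => Real.exp (-u) / u) 1 hx
  simp only [smul_eq_mul, mul_one] at h
  have h2 : (∫ t in Set.Ioi (1 : ℝ), Real.exp (-(x * t)) / t)
      = ∫ t in Set.Ioi (1 : ℝ), x * (Real.exp (-(x * t)) / (x * t)) := by
    apply setIntegral_congr_fun measurableSet_Ioi
    intro t ht
    have ht0 : (0:ℝ) < t := lt_of_lt_of_le one_pos (le_of_lt ht)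
    field_simp
  rw [h2, integral_const_mul, h, Ff]
  field_simp

lemma Fsplit {a b : ℝ} (ha : 0 < a) (hab : a ≤ b) :
    Ff a = (∫ u in Set.Ioc a b, Real.exp (-u) / u) + Ff b := by
  rw [Ff, Ff, ← setIntegral_union (Set.Ioc_disjoint_Ioi le_rfl) measurableSet_Ioi
    ((intF ha).mono_set Set.Ioc_subset_Ioi_self) (intF (ha.trans_le hab)),
    Set.Ioc_union_Ioi_eq_Ioi hab]

lemma Fderiv {x : ℝ} (hx : 0 < x) : HasDerivAt Ff (-(Real.exp (-x) / x)) x := by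
  set c := x / 2 with hc
  have hc0 : 0 < c := by positivity
  have hcx : c < x := by simp [hc]; linarith
  have hG : HasDerivAt (fun y => Ff c - ∫ u in c..y, Real.exp (-u) / u)
      (-(Real.exp (-x) / x)) x := by
    have hii : IntervalIntegrable (fun u => Real.exp (-u) / u) volume c x := by
      rw [intervalIntegrable_iff_integrableOn_Ioc_of_le hcx.le]
      exact (intF hc0).mono_set Set.Ioc_subset_Ioi_self
    have hmeas : StronglyMeasurableAtFilter (fun u => Real.exp (-u) / u) (𝓝 x) :=
      ⟨Set.univ, univ_mem,
        (((Real.measurable_exp.comp measurable_neg).div measurable_id).aestronglyMeasurable)⟩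
    have hcont : ContinuousAt (fun u => Real.exp (-u) / u) x :=
      ((Real.continuous_exp.comp continuous_neg).continuousAt).div continuousAt_id hx.ne'
    have := intervalIntegral.integral_hasDerivAt_right hii hmeas hcont
    simpa using this.const_sub (Ff c)
  apply hG.congr_of_eventuallyEq
  filter_upwards [Ioi_mem_nhds hcx] with y hy
  have hsplit := Fsplit hc0 (le_of_lt hy)
  rw [intervalIntegral.integral_of_le (le_of_lt hy)]
  linarith [hsplit]

lemma Flim : Tendsto Ff atTop (𝓝 0) := by
  have h1 : ∀ᶠ x in atTop, 0 ≤ Ff x := by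
    filter_upwards [eventually_gt_atTop (0:ℝ)] with x hx
    exact setIntegral_nonneg measurableSet_Ioi fun u hu => by
      have : 0 < u := hx.trans hu; positivity
  have h2 : ∀ᶠ x in atTop, Ff x ≤ Real.exp (-x) := by
    filter_upwards [eventually_ge_atTop (1:ℝ)] with x hx
    have hx0 : (0:ℝ) < x := lt_of_lt_of_le one_pos hx
    calc Ff x ≤ ∫ u in Set.Ioi x, Real.exp (-u) := by
          apply setIntegral_mono_on (intF hx0) ((exp_neg_integrableOn_Ioi x one_pos).congr_fun
            (fun u _ => by norm_num) measurableSet_Ioi) measurableSet_Ioi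
          intro u hu
          have hu1 : 1 ≤ u := hx.trans (le_of_lt hu)
          rw [div_le_iff₀ (lt_of_lt_of_le one_pos hu1)]
          nlinarith [Real.exp_pos (-u)]
      _ = Real.exp (-x) := integral_exp_neg_Ioi x
  have h3 : Tendsto (fun x : ℝ => Real.exp (-x)) atTop (𝓝 0) :=
    Real.tendsto_exp_neg_atTop_nhds_zero
  exact tendsto_of_tendsto_of_tendsto_of_le_of_le' tendsto_const_nhds h3 h1 h2

lemma key {g g' : ℝ → ℝ} (hd : ∀ x ∈ Set.Ioi (0:ℝ), HasDerivAt g (g' x) x)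
    (hneg : ∀ x ∈ Set.Ioi (0:ℝ), g' x < 0) (hlim : Tendsto g atTop (𝓝 0))
    {x : ℝ} (hx : 0 < x) : 0 < g x := by
  have anti : StrictAntiOn g (Set.Ici x) := by
    apply strictAntiOn_of_deriv_neg (convex_Ici x)
    · intro y hy
      exact (hd y (hx.trans_le hy)).continuousAt.continuousWithinAt
    · intro y hy
      rw [interior_Ici] at hy
      rw [(hd y (hx.trans hy)).deriv]
      exact hneg y (hx.trans hy)
  have h1 : 0 ≤ g (x + 1) := by
    apply le_of_tendsto hlim
    filter_upwards [eventually_ge_atTop (x+1)] with y hy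
    exact anti.antitoneOn (by simp : x + 1 ∈ Set.Ici x)
      (by simp only [Set.mem_Ici]; linarith : y ∈ Set.Ici x) hy
  have h2 : g (x + 1) < g x := anti Set.self_mem_Ici (by simp) (by linarith)
  linarith

lemma loga {x : ℝ} (hx : 0 < x) : 1 / (x + 1) < Real.log (1 + 1 / x) := by
  have h1 : Real.log (x / (x + 1)) < x / (x + 1) - 1 :=
    Real.log_lt_sub_one_of_pos (by positivity) (by
      intro h
      rw [div_eq_one_iff_eq (by positivity : x + 1 ≠ 0)] at h
      linarith)
  have h2 : Real.log (x / (x + 1)) = -Real.log (1 + 1 / x) := by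
    rw [← Real.log_inv]
    congr 1
    field_simp
  have h3 : x / (x + 1) - 1 = -(1 / (x + 1)) := by field_simp; ring
  rw [h2, h3] at h1
  linarith

lemma logb {x : ℝ} (hx : 0 < x) : Real.log (1 + 2 / x) < 1 / x + 1 / (x + 2) := by
  have h0 : 0 < (fun y : ℝ => 1 / y + 1 / (y + 2) - Real.log (1 + 2 / y)) x := by
    apply key (g' := fun y => -(1 / y - 1 / (y + 2))^2) ?_ ?_ ?_ hx
    · intro y hy
      have hy0 : (0:ℝ) < y := hy
      have hy2 : (0:ℝ) < y + 2 := by linarith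
      have d1 : HasDerivAt (fun y : ℝ => 1 / y) (-(1/y^2)) y := by
        simpa [one_div] using hasDerivAt_inv hy0.ne'
      have d2 : HasDerivAt (fun y : ℝ => 1 / (y + 2)) (-(1/(y+2)^2)) y := by
        have := ((hasDerivAt_id y).add_const 2).inv hy2.ne'
        simpa [one_div, neg_div, Pi.inv_def] using this
      have d3 : HasDerivAt (fun y : ℝ => Real.log (1 + 2 / y))
          ((2 * -(1/y^2)) / (1 + 2 / y)) y := by
        have h4 : HasDerivAt (fun y : ℝ => 1 + 2 / y) (2 * -(1/y^2)) y := by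
          have := (hasDerivAt_inv hy0.ne').const_mul 2
          simpa [one_div, div_eq_mul_inv] using this.const_add 1
        exact h4.log (by positivity)
      have := (d1.add d2).sub d3
      refine this.congr_deriv ?_
      have hne : 1 + 2 / y ≠ 0 := by positivity
      field_simp
      ring
    · intro y hy
      have hy0 : (0:ℝ) < y := hy
      have hy2 : (0:ℝ) < y + 2 := by linarith
      have : 1 / y - 1 / (y + 2) ≠ 0 := by
        have : 1 / (y + 2) < 1 / y := by
          apply one_div_lt_one_div_of_lt hy0; linarith
        linarith
      have := pow_pos (abs_pos.mpr this) 2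
      rw [sq_abs] at this
      linarith
    · have t1 : Tendsto (fun y : ℝ => 1 / y) atTop (𝓝 0) := by
        simpa [one_div] using (tendsto_inv_atTop_zero : Tendsto (fun y : ℝ => y⁻¹) atTop (𝓝 0))
      have t2 : Tendsto (fun y : ℝ => 1 / (y + 2)) atTop (𝓝 0) :=
        t1.comp (tendsto_atTop_add_const_right _ 2 tendsto_id)
      have t3 : Tendsto (fun y : ℝ => Real.log (1 + 2 / y)) atTop (𝓝 0) := by
        have h5 : Tendsto (fun y : ℝ => 1 + 2 / y) atTop (𝓝 1) := by
          have : Tendsto (fun y : ℝ => 2 / y) atTop (𝓝 0) := by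
            simpa [div_eq_mul_inv] using t1.const_mul 2
          simpa using this.const_add 1
        have := (Real.continuousAt_log one_ne_zero).tendsto.comp h5
        simpa [Function.comp_def] using this
      have := (t1.add t2).sub t3
      simpa using this
  simp only at h0
  linarith

lemma tlog1 : Tendsto (fun y : ℝ => Real.log (1 + 1 / y)) atTop (𝓝 0) := by
  have t1 : Tendsto (fun y : ℝ => 1 / y) atTop (𝓝 0) := by
    simpa [one_div] using (tendsto_inv_atTop_zero : Tendsto (fun y : ℝ => y⁻¹) atTop (𝓝 0))
  have h5 : Tendsto (fun y : ℝ => 1 + 1 / y) atTop (𝓝 1) := by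
    simpa using t1.const_add 1
  have := (Real.continuousAt_log one_ne_zero).tendsto.comp h5
  simpa [Function.comp_def] using this

lemma tlog2 : Tendsto (fun y : ℝ => Real.log (1 + 2 / y)) atTop (𝓝 0) := by
  have t1 : Tendsto (fun y : ℝ => 2 / y) atTop (𝓝 0) := by
    have : Tendsto (fun y : ℝ => 1 / y) atTop (𝓝 0) := by
      simpa [one_div] using (tendsto_inv_atTop_zero : Tendsto (fun y : ℝ => y⁻¹) atTop (𝓝 0))
    simpa [div_eq_mul_inv] using this.const_mul 2
  have h5 : Tendsto (fun y : ℝ => 1 + 2 / y) atTop (𝓝 1) := by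
    simpa using t1.const_add 1
  have := (Real.continuousAt_log one_ne_zero).tendsto.comp h5
  simpa [Function.comp_def] using this

theorem stmt_7 :
    ∀ x > (0 : ℝ),
      (1 / 2) * Real.exp (-x) * Real.log (1 + 2 / x) <
        (∫ t in Set.Ioi (1 : ℝ), Real.exp (-(x * t)) / t) ∧
      (∫ t in Set.Ioi (1 : ℝ), Real.exp (-(x * t)) / t) <
        Real.exp (-x) * Real.log (1 + 1 / x) := by
  intro x hx
  rw [subst hx]
  have texp : Tendsto (fun y : ℝ => Real.exp (-y)) atTop (𝓝 0) :=
    Real.tendsto_exp_neg_atTop_nhds_zero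
  constructor
  · -- lower bound: 0 < Ff x - (1/2) exp(-x) log(1+2/x)
    have h0 : 0 < (fun y : ℝ => Ff y - 1 / 2 * Real.exp (-y) * Real.log (1 + 2 / y)) x := by
      apply key
        (g' := fun y => Real.exp (-y) * (1 / 2 * Real.log (1 + 2 / y) - (y + 1) / (y * (y + 2))))
        ?_ ?_ ?_ hx
      · intro y hy
        have hy0 : (0:ℝ) < y := hy
        have hy2 : (0:ℝ) < y + 2 := by linarith
        have he : HasDerivAt (fun y : ℝ => Real.exp (-y)) (Real.exp (-y) * (-1)) y :=
          ((hasDerivAt_id y).neg).exp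
        have d3 : HasDerivAt (fun y : ℝ => Real.log (1 + 2 / y))
            ((2 * -(1/y^2)) / (1 + 2 / y)) y := by
          have h4 : HasDerivAt (fun y : ℝ => 1 + 2 / y) (2 * -(1/y^2)) y := by
            have := (hasDerivAt_inv hy0.ne').const_mul 2
            simpa [one_div, div_eq_mul_inv] using this.const_add 1
          exact h4.log (by positivity)
        have hm := ((he.const_mul (1/2)).mul d3)
        have := (Fderiv hy0).sub hm
        refine this.congr_deriv ?_
        have hne : 1 + 2 / y ≠ 0 := by positivity
        field_simp
        ring
      · intro y hy
        have hy0 : (0:ℝ) < y := hy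
        have hy2 : (0:ℝ) < y + 2 := by linarith
        have hb := logb hy0
        have heq : 1 / y + 1 / (y + 2) = 2 * ((y + 1) / (y * (y + 2))) := by
          field_simp
          ring
        have : 1 / 2 * Real.log (1 + 2 / y) - (y + 1) / (y * (y + 2)) < 0 := by
          rw [heq] at hb
          linarith
        exact mul_neg_of_pos_of_neg (Real.exp_pos _) this
      · have := Flim.sub ((texp.mul tlog2).const_mul (1/2))
        simpa [mul_assoc] using this
    simp only at h0
    linarith
  · -- upper bound: 0 < exp(-x) log(1+1/x) - Ff x
    have h0 : 0 < (fun y : ℝ => Real.exp (-y) * Real.log (1 + 1 / y) - Ff y) x := by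
      apply key
        (g' := fun y => Real.exp (-y) * (1 / (y + 1) - Real.log (1 + 1 / y)))
        ?_ ?_ ?_ hx
      · intro y hy
        have hy0 : (0:ℝ) < y := hy
        have hy1 : (0:ℝ) < y + 1 := by linarith
        have he : HasDerivAt (fun y : ℝ => Real.exp (-y)) (Real.exp (-y) * (-1)) y :=
          ((hasDerivAt_id y).neg).exp
        have d3 : HasDerivAt (fun y : ℝ => Real.log (1 + 1 / y))
            ((-(1/y^2)) / (1 + 1 / y)) y := by
          have h4 : HasDerivAt (fun y : ℝ => 1 + 1 / y) (-(1/y^2)) y := by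
            have := hasDerivAt_inv hy0.ne'
            simpa [one_div] using this.const_add 1
          exact h4.log (by positivity)
        have := (he.mul d3).sub (Fderiv hy0)
        refine this.congr_deriv ?_
        have hne : 1 + 1 / y ≠ 0 := by positivity
        field_simp
        ring
      · intro y hy
        have hy0 : (0:ℝ) < y := hy
        have ha := loga hy0
        exact mul_neg_of_pos_of_neg (Real.exp_pos _) (by linarith)
      · have := (texp.mul tlog1).sub Flim
        simpa using this
    simp only at h0
    linarith
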